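/- Let (X_i)_{i≥1} be i.i.d. Bernoulli(p) with p ∈ (c, 1−c) for a constant c ∈ (0, 1/2), and let q ∈ [0, p). Consider the event E that X_1 = 1 and for all n ≥ 1, Σ_{i=2}^{n+1}(X_i − q) ≥ q − 1. Then E implies that for all n ≥ 1, (1/n)Σ_{i=1}^n X_i ≥ q, and P(E) ≥ p·(1 − u^{1−q}) where u ∈ (0,1) satisfies p·u^{1−q} + (1−p)·u^{−q} = 1. -/

import Mathlib

open MeasureTheory ProbabilityTheory

namespace Stmt14Aux

variable {Ω : Type*}

noncomputable def Sw (X : ℕ → Ω → ℝ) (q : ℝ) (n : ℕ) (ω : Ω) : ℝ :=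
  ∑ i ∈ Finset.Icc 2 (n + 1), (X i ω - q)

def Gw (X : ℕ → Ω → ℝ) (q : ℝ) (N : ℕ) : Set Ω :=
  {ω | ∀ n, 1 ≤ n → n ≤ N → q - 1 ≤ Sw X q n ω}

def Bw (X : ℕ → Ω → ℝ) (q : ℝ) (N : ℕ) : Set Ω :=
  Gw X q N ∩ {ω | Sw X q (N + 1) ω < q - 1}

lemma Sw_succ (X : ℕ → Ω → ℝ) (q : ℝ) (n : ℕ) (ω : Ω) :
    Sw X q (n + 1) ω = Sw X q n ω + (X (n + 2) ω - q) :=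
  Finset.sum_Icc_succ_top (by omega) _

lemma Sw_zero (X : ℕ → Ω → ℝ) (q : ℝ) (ω : Ω) : Sw X q 0 ω = 0 := by
  have : Finset.Icc 2 1 = (∅ : Finset ℕ) := by decide
  simp [Sw, this]

lemma Gw_zero (X : ℕ → Ω → ℝ) (q : ℝ) : Gw X q 0 = Set.univ := by
  ext ω; simp only [Gw, Set.mem_setOf_eq, Set.mem_univ, iff_true]
  intro n h1 h2; omega

lemma Gw_antitone (X : ℕ → Ω → ℝ) (q : ℝ) : Antitone (Gw X q) :=
  fun N M h ω hω n h1 h2 => hω n h1 (h2.trans h)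

lemma Gw_split (X : ℕ → Ω → ℝ) (q : ℝ) (N : ℕ) :
    Gw X q N = Bw X q N ∪ Gw X q (N + 1) := by
  ext ω
  constructor
  · intro hω
    by_cases h : Sw X q (N + 1) ω < q - 1
    · exact Or.inl ⟨hω, h⟩
    · refine Or.inr fun n h1 h2 => ?_
      rcases Nat.lt_or_ge n (N + 1) with h' | h'
      · exact hω n h1 (by omega)
      · have : n = N + 1 := by omega
        subst this; exact not_lt.1 h
  · rintro (⟨h, _⟩ | h)
    · exact h
    · exact fun n h1 h2 => h n h1 (by omega)

lemma disjoint_Bw_Gw (X : ℕ → Ω → ℝ) (q : ℝ) (N : ℕ) :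
    Disjoint (Bw X q N) (Gw X q (N + 1)) := by
  rw [Set.disjoint_left]
  rintro ω ⟨_, h2⟩ hg
  exact absurd (hg (N + 1) (by omega) le_rfl) (not_le.2 h2)

lemma cover (X : ℕ → Ω → ℝ) (q : ℝ) (N : ℕ) :
    (Set.univ : Set Ω) ⊆ Gw X q N ∪ ⋃ k ∈ Finset.range N, Bw X q k := by
  intro ω _
  by_cases hω : ω ∈ Gw X q N
  · exact Or.inl hω
  · right
    simp only [Gw, Set.mem_setOf_eq] at hω
    push_neg at hω
    have hex : ∃ n, 1 ≤ n ∧ n ≤ N ∧ Sw X q n ω < q - 1 := hω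
    classical
    let k := Nat.find hex
    obtain ⟨hk1, hk2, hk3⟩ := Nat.find_spec hex
    have hkmin : ∀ m, m < k → ¬(1 ≤ m ∧ m ≤ N ∧ Sw X q m ω < q - 1) :=
      fun m hm => Nat.find_min hex hm
    simp only [Set.mem_iUnion]
    refine ⟨k - 1, ?_, ?_, ?_⟩
    · simp only [Finset.mem_range]; omega
    · intro n h1 h2
      by_contra hc
      exact hkmin n (by omega) ⟨h1, by omega, not_le.1 hc⟩
    · have : k - 1 + 1 = k := by omega
      rw [this]; exact hk3

lemma measurable_Sw {m' : MeasurableSpace Ω} {X : ℕ → Ω → ℝ} (q : ℝ) (n : ℕ)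
    (h : ∀ i, 2 ≤ i → i ≤ n + 1 → Measurable[m'] (X i)) :
    Measurable[m'] (Sw X q n) := by
  unfold Sw
  exact Finset.measurable_sum _ fun i hi => by
    have := Finset.mem_Icc.1 hi
    exact (h i this.1 this.2).sub measurable_const

lemma measurableSet_Gw {m' : MeasurableSpace Ω} {X : ℕ → Ω → ℝ} (q : ℝ) (N : ℕ)
    (h : ∀ i, 2 ≤ i → i ≤ N + 1 → Measurable[m'] (X i)) :
    MeasurableSet[m'] (Gw X q N) := by
  have : Gw X q N = ⋂ (n : ℕ), ⋂ (_ : 1 ≤ n ∧ n ≤ N), {ω | q - 1 ≤ Sw X q n ω} := by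
    ext ω; simp only [Gw, Set.mem_setOf_eq, Set.mem_iInter]; tauto
  rw [this]
  refine MeasurableSet.iInter fun n => MeasurableSet.iInter fun hn => ?_
  exact measurableSet_le measurable_const (measurable_Sw q n fun i h2 hi => h i h2 (by omega))

lemma measurableSet_Bw {m' : MeasurableSpace Ω} {X : ℕ → Ω → ℝ} (q : ℝ) (N : ℕ)
    (h : ∀ i, 2 ≤ i → i ≤ N + 2 → Measurable[m'] (X i)) :
    MeasurableSet[m'] (Bw X q N) := by
  refine (measurableSet_Gw q N fun i h2 hi => h i h2 (by omega)).inter ?_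
  exact measurableSet_lt (measurable_Sw q (N + 1) fun i h2 hi => h i h2 (by omega))
    measurable_const

end Stmt14Aux

open Stmt14Aux

set_option maxHeartbeats 1000000 in
theorem stmt_14 {Ω : Type*} {m : MeasurableSpace Ω} {P : Measure Ω}
    [IsProbabilityMeasure P] (c p q u : ℝ) (hc : 0 < c) (hc' : c < 1/2)
    (hp : p ∈ Set.Ioo c (1 - c)) (hq : q ∈ Set.Ico 0 p)
    (hu : u ∈ Set.Ioo (0:ℝ) 1)
    (huEq : p * u ^ (1 - q) + (1 - p) * u ^ (-q) = 1)
    (X : ℕ → Ω → ℝ) (hmeas : ∀ i, Measurable (X i))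
    (hindep : iIndepFun X P)
    (hbern01 : ∀ i, ∀ᵐ ω ∂P, X i ω = 0 ∨ X i ω = 1)
    (hbernp : ∀ i, P {ω | X i ω = 1} = ENNReal.ofReal p) :
    (∀ ω, (X 1 ω = 1 ∧
        ∀ n : ℕ, 1 ≤ n → q - 1 ≤ ∑ i ∈ Finset.Icc 2 (n + 1), (X i ω - q)) →
      ∀ n : ℕ, 1 ≤ n → q ≤ (∑ i ∈ Finset.Icc 1 n, X i ω) / n) ∧
    ENNReal.ofReal (p * (1 - u ^ (1 - q))) ≤
      P {ω | X 1 ω = 1 ∧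
        ∀ n : ℕ, 1 ≤ n → q - 1 ≤ ∑ i ∈ Finset.Icc 2 (n + 1), (X i ω - q)} := by
  obtain ⟨hcp, hpc⟩ := hp
  obtain ⟨hq0, hqp⟩ := hq
  obtain ⟨hu0, hu1⟩ := hu
  have hp0 : 0 < p := hc.trans hcp
  have hp1 : p < 1 := by linarith
  have hq1 : q < 1 := by linarith
  constructor
  · -- deterministic part
    rintro ω ⟨hX1, hsum⟩ n hn
    have hn0 : (0:ℝ) < n := by exact_mod_cast Nat.pos_of_ne_zero (by omega)
    rw [le_div_iff₀ hn0]
    rcases eq_or_lt_of_le hn with h1 | h2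
    · rw [← h1]
      simp only [Finset.Icc_self, Finset.sum_singleton, hX1, Nat.cast_one, mul_one]
      linarith
    · have h2' : 2 ≤ n := h2
      have hkey := hsum (n - 1) (by omega)
      rw [show n - 1 + 1 = n by omega] at hkey
      have hins : Finset.Icc 1 n = insert 1 (Finset.Icc 2 n) := by
        ext i; simp only [Finset.mem_Icc, Finset.mem_insert]; omega
      have hnotmem : (1:ℕ) ∉ Finset.Icc 2 n := by simp
      rw [hins, Finset.sum_insert hnotmem, hX1]
      have hsplit : ∑ i ∈ Finset.Icc 2 n, (X i ω - q)
          = (∑ i ∈ Finset.Icc 2 n, X i ω) - (Finset.Icc 2 n).card * q := by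
        rw [Finset.sum_sub_distrib, Finset.sum_const, nsmul_eq_mul]
      have hcard : ((Finset.Icc 2 n).card : ℝ) = (n : ℝ) - 1 := by
        rw [Nat.card_Icc]
        have : n + 1 - 2 = n - 1 := by omega
        rw [this]
        push_cast [Nat.cast_sub (by omega : 1 ≤ n)]
        ring
      rw [hsplit, hcard] at hkey
      linarith
  · -- probabilistic part
    classical
    set A : Set Ω := {ω | X 1 ω = 1} with hAdef
    -- rpow measurability helper
    have hrmeas : ∀ {m' : MeasurableSpace Ω} (f : Ω → ℝ), Measurable[m'] f →
        Measurable[m'] fun ω => u ^ f ω := by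
      intro m' f hf
      have hfe : (fun ω => u ^ f ω) = fun ω => Real.exp (Real.log u * f ω) :=
        funext fun ω => Real.rpow_def_of_pos hu0 _
      rw [hfe]
      exact (measurable_const.mul hf).exp
    have hSmeas : ∀ n, Measurable (Sw X q n) := fun n =>
      measurable_Sw q n fun i _ _ => hmeas i
    have hGmeas : ∀ N, MeasurableSet (Gw X q N) := fun N =>
      measurableSet_Gw q N fun i _ _ => hmeas i
    have hBmeas : ∀ N, MeasurableSet (Bw X q N) := fun N =>
      measurableSet_Bw q N fun i _ _ => hmeas i
    have haeX : ∀ᵐ ω ∂P, ∀ i, X i ω = 0 ∨ X i ω = 1 := ae_all_iff.2 hbern01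
    have hrpos : ∀ x : ℝ, 0 < u ^ x := fun x => Real.rpow_pos_of_pos hu0 x
    have hrle : ∀ x y : ℝ, x ≤ y → u ^ y ≤ u ^ x := fun x y h =>
      Real.rpow_le_rpow_of_exponent_ge hu0 hu1.le h
    -- integrability of u ^ (Sw n)
    have hSint : ∀ n, Integrable (fun ω => u ^ Sw X q n ω) P := by
      intro n
      refine Integrable.mono' (integrable_const (u ^ (-(q * n)))) 
        ((hrmeas _ (hSmeas n)).aestronglyMeasurable) ?_
      filter_upwards [haeX] with ω hω
      rw [Real.norm_eq_abs, abs_of_pos (hrpos _)]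
      refine hrle _ _ ?_
      have hterm : ∀ i ∈ Finset.Icc 2 (n + 1), -q ≤ X i ω - q := by
        intro i _
        rcases hω i with h | h <;> rw [h] <;> linarith
      calc -(q * n) = (Finset.Icc 2 (n+1)).card • (-q) := by
            rw [Nat.card_Icc, nsmul_eq_mul]
            have : n + 1 + 1 - 2 = n := by omega
            rw [this]; ring
        _ ≤ Sw X q n ω := by
            rw [← Finset.sum_const]
            exact Finset.sum_le_sum hterm
    have hXint : ∀ i, Integrable (fun ω => u ^ (X i ω - q)) P := by
      intro i
      refine Integrable.mono' (integrable_const (u ^ (-q)))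
        ((hrmeas _ ((hmeas i).sub measurable_const)).aestronglyMeasurable) ?_
      filter_upwards [hbern01 i] with ω hω
      rw [Real.norm_eq_abs, abs_of_pos (hrpos _)]
      refine hrle _ _ ?_
      rcases hω with h | h <;> rw [h] <;> linarith
    -- the mean of u ^ (X i - q) is 1
    have hmean : ∀ i, ∫ ω, u ^ (X i ω - q) ∂P = 1 := by
      intro i
      have hAi : MeasurableSet {ω | X i ω = 1} := hmeas i (measurableSet_singleton 1)
      have hae : (fun ω => u ^ (X i ω - q)) =ᵐ[P]
          fun ω => ({ω | X i ω = 1}).indicator (fun _ => u ^ (1 - q)) ω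
            + ({ω | X i ω = 1})ᶜ.indicator (fun _ => u ^ (-q)) ω := by
        filter_upwards [hbern01 i] with ω hω
        rcases hω with h | h
        · have hmem : ω ∉ {ω | X i ω = 1} := by simp [h]
          simp [Set.indicator_of_notMem hmem, h,
            Set.indicator_of_mem (Set.mem_compl hmem)]
        · have hmem : ω ∈ {ω | X i ω = 1} := h
          simp [Set.indicator_of_mem hmem, h,
            Set.indicator_of_notMem (Set.notMem_compl_iff.2 hmem)]
      rw [integral_congr_ae hae, integral_add
        ((integrable_const _).indicator hAi) ((integrable_const _).indicator hAi.compl),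
        integral_indicator_const _ hAi, integral_indicator_const _ hAi.compl]
      have h1 : P {ω | X i ω = 1} = ENNReal.ofReal p := hbernp i
      have h2 : P ({ω | X i ω = 1})ᶜ = ENNReal.ofReal (1 - p) := by
        rw [prob_compl_eq_one_sub hAi, h1]
        rw [← ENNReal.ofReal_one, ← ENNReal.ofReal_sub _ hp0.le]
      rw [measureReal_def, measureReal_def, h1, h2, ENNReal.toReal_ofReal hp0.le, ENNReal.toReal_ofReal (by linarith)]
      simp only [smul_eq_mul]
      linarith [huEq]
    -- independence machinery
    have hcle : ∀ i : ℕ, MeasurableSpace.comap (X i) inferInstance ≤ m :=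
      fun i => (hmeas i).comap_le
    have hiI : iIndep (fun i => MeasurableSpace.comap (X i) inferInstance) P := hindep.iIndep
    have hMeasM : ∀ (s : Set ℕ) (i : ℕ), i ∈ s →
        Measurable[⨆ j ∈ s, MeasurableSpace.comap (X j) inferInstance] (X i) := by
      intro s i hi
      exact Measurable.of_comap_le
        (le_iSup₂ (f := fun j (_ : j ∈ s) => MeasurableSpace.comap (X j) inferInstance) i hi)
    -- the independence used in the martingale step
    have hIndepStep : ∀ N : ℕ, IndepFun
        ((Gw X q N).indicator fun ω => u ^ Sw X q N ω)
        (fun ω => u ^ (X (N + 2) ω - q)) P := by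
      intro N
      have hdisj : Disjoint (Set.Icc 2 (N + 1)) ({N + 2} : Set ℕ) := by
        simp only [Set.disjoint_singleton_right, Set.mem_Icc]
        omega
      have hInd := indep_iSup_of_disjoint hcle hiI hdisj
      have hXi1 : ∀ i, 2 ≤ i → i ≤ N + 1 →
          Measurable[⨆ j ∈ Set.Icc 2 (N + 1),
            MeasurableSpace.comap (X j) inferInstance] (X i) :=
        fun i h1 h2 => hMeasM _ i (Set.mem_Icc.2 ⟨h1, h2⟩)
      have hf := Measurable.indicator (hrmeas _ (measurable_Sw q N hXi1))
        (measurableSet_Gw q N hXi1)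
      have hg := hrmeas
        (m' := ⨆ j ∈ ({N + 2} : Set ℕ), MeasurableSpace.comap (X j) inferInstance)
        (fun ω => X (N + 2) ω - q)
        ((hMeasM {N + 2} (N + 2) rfl).sub measurable_const)
      rw [IndepFun_iff_Indep]
      exact indep_of_indep_of_le_left (indep_of_indep_of_le_right hInd hg.comap_le) hf.comap_le
    -- the key martingale identity
    have hkey : ∀ N : ℕ, (∑ k ∈ Finset.range N, ∫ ω in Bw X q k, u ^ Sw X q (k + 1) ω ∂P)
        + ∫ ω in Gw X q N, u ^ Sw X q N ω ∂P = 1 := by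
      intro N
      induction N with
      | zero =>
        simp only [Finset.range_zero, Finset.sum_empty, zero_add, Gw_zero]
        rw [Measure.restrict_univ]
        have h0 : (fun ω : Ω => u ^ Sw X q 0 ω) = fun _ => (1 : ℝ) :=
          funext fun ω => by rw [Sw_zero]; exact Real.rpow_zero u
        rw [h0, integral_const]
        simp
      | succ N ih =>
        rw [Finset.sum_range_succ]
        have h1 : ∫ ω in Gw X q N, u ^ Sw X q (N + 1) ω ∂P
            = (∫ ω in Bw X q N, u ^ Sw X q (N + 1) ω ∂P)
              + ∫ ω in Gw X q (N + 1), u ^ Sw X q (N + 1) ω ∂P := by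
          rw [← setIntegral_union (disjoint_Bw_Gw X q N) (hGmeas (N + 1))
            ((hSint _).integrableOn) ((hSint _).integrableOn), ← Gw_split]
        have h2 : ∫ ω in Gw X q N, u ^ Sw X q (N + 1) ω ∂P
            = ∫ ω, ((Gw X q N).indicator fun ω => u ^ Sw X q N ω) ω
                * u ^ (X (N + 2) ω - q) ∂P := by
          rw [← integral_indicator (hGmeas N)]
          congr 1
          funext ω
          by_cases hω : ω ∈ Gw X q N
          · rw [Set.indicator_of_mem hω, Set.indicator_of_mem hω, Sw_succ,
              Real.rpow_add hu0]
          · rw [Set.indicator_of_notMem hω, Set.indicator_of_notMem hω, zero_mul]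
        have h3 := IndepFun.integral_fun_mul_eq_mul_integral (hIndepStep N)
          ((hSint N).indicator (hGmeas N)).aestronglyMeasurable (hXint (N + 2)).aestronglyMeasurable
        have hstep : ∫ ω in Gw X q N, u ^ Sw X q N ω ∂P
            = (∫ ω in Bw X q N, u ^ Sw X q (N + 1) ω ∂P)
              + ∫ ω in Gw X q (N + 1), u ^ Sw X q (N + 1) ω ∂P := by
          rw [← h1, h2]
          symm
          calc ∫ ω, ((Gw X q N).indicator fun ω => u ^ Sw X q N ω) ω
                * u ^ (X (N + 2) ω - q) ∂P
              = (∫ ω, ((Gw X q N).indicator fun ω => u ^ Sw X q N ω) ω ∂P)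
                * ∫ ω, u ^ (X (N + 2) ω - q) ∂P := h3
            _ = ∫ ω in Gw X q N, u ^ Sw X q N ω ∂P := by
                rw [hmean (N + 2), mul_one, integral_indicator (hGmeas N)]
        rw [← ih, hstep]
        ring
    -- bounding the ruin probability
    have hsum_bound : ∀ N : ℕ,
        ∑ k ∈ Finset.range N, (P (Bw X q k)).toReal ≤ u ^ (1 - q) := by
      intro N
      have hpos1q : (0 : ℝ) < u ^ (1 - q) := hrpos _
      have hIk : ∀ k ∈ Finset.range N,
          u ^ (q - 1) * (P (Bw X q k)).toReal
            ≤ ∫ ω in Bw X q k, u ^ Sw X q (k + 1) ω ∂P := by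
        intro k _
        have := setIntegral_ge_of_const_le (hBmeas k) (measure_ne_top P _)
          (fun ω hω => hrle _ _ hω.2.le) ((hSint _).integrableOn)
        rwa [smul_eq_mul, mul_comm, measureReal_def] at this
      have hJ : 0 ≤ ∫ ω in Gw X q N, u ^ Sw X q N ω ∂P :=
        setIntegral_nonneg (hGmeas N) fun ω _ => (hrpos _).le
      have h1 : ∑ k ∈ Finset.range N, u ^ (q - 1) * (P (Bw X q k)).toReal ≤ 1 := by
        calc ∑ k ∈ Finset.range N, u ^ (q - 1) * (P (Bw X q k)).toReal
            ≤ ∑ k ∈ Finset.range N, ∫ ω in Bw X q k, u ^ Sw X q (k + 1) ω ∂P :=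
              Finset.sum_le_sum hIk
          _ ≤ 1 := by linarith [hkey N]
      rw [← Finset.mul_sum] at h1
      have hq1' : u ^ (q - 1) = (u ^ (1 - q))⁻¹ := by
        rw [show (q - 1 : ℝ) = -(1 - q) by ring, Real.rpow_neg hu0.le]
      rw [hq1'] at h1
      have h2 := mul_le_mul_of_nonneg_left h1 hpos1q.le
      rwa [← mul_assoc, mul_inv_cancel₀ hpos1q.ne', one_mul, mul_one] at h2
    -- bound on each Gw N
    have hGbound : ∀ N : ℕ, ENNReal.ofReal (1 - u ^ (1 - q)) ≤ P (Gw X q N) := by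
      intro N
      have hcov : (1 : ENNReal) ≤ P (Gw X q N) + ∑ k ∈ Finset.range N, P (Bw X q k) := by
        calc (1 : ENNReal) = P Set.univ := measure_univ.symm
          _ ≤ P (Gw X q N ∪ ⋃ k ∈ Finset.range N, Bw X q k) := measure_mono (cover X q N)
          _ ≤ P (Gw X q N) + P (⋃ k ∈ Finset.range N, Bw X q k) := measure_union_le _ _
          _ ≤ _ := add_le_add_right (measure_biUnion_finset_le _ _) _
      have hsum' : ∑ k ∈ Finset.range N, P (Bw X q k) ≤ ENNReal.ofReal (u ^ (1 - q)) := by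
        have heq : ∑ k ∈ Finset.range N, P (Bw X q k)
            = ENNReal.ofReal (∑ k ∈ Finset.range N, (P (Bw X q k)).toReal) := by
          rw [ENNReal.ofReal_sum_of_nonneg fun i _ => ENNReal.toReal_nonneg]
          exact Finset.sum_congr rfl fun k _ =>
            (ENNReal.ofReal_toReal (measure_ne_top P _)).symm
        rw [heq]
        exact ENNReal.ofReal_le_ofReal (hsum_bound N)
      have h2 : (1 : ENNReal) ≤ P (Gw X q N) + ENNReal.ofReal (u ^ (1 - q)) :=
        hcov.trans (add_le_add_right hsum' _)
      calc ENNReal.ofReal (1 - u ^ (1 - q))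
          = 1 - ENNReal.ofReal (u ^ (1 - q)) := by
            rw [ENNReal.ofReal_sub _ (hrpos _).le, ENNReal.ofReal_one]
        _ ≤ P (Gw X q N) := tsub_le_iff_right.2 h2
    -- pass to the limit
    have hF : ENNReal.ofReal (1 - u ^ (1 - q)) ≤ P (⋂ N, Gw X q N) := by
      have htend := tendsto_measure_iInter_atTop
        (fun N => (hGmeas N).nullMeasurableSet) (Gw_antitone X q)
        ⟨0, measure_ne_top P _⟩
      exact ge_of_tendsto' htend fun N => hGbound N
    -- independence of A and the tail event
    have hAmeas1 : MeasurableSet[⨆ j ∈ ({1} : Set ℕ),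
        MeasurableSpace.comap (X j) inferInstance] A := by
      have hX1 : Measurable[⨆ j ∈ ({1} : Set ℕ),
          MeasurableSpace.comap (X j) inferInstance] (X 1) := hMeasM {1} 1 rfl
      have hA' : A = X 1 ⁻¹' {1} := rfl
      rw [hA']
      exact hX1 (measurableSet_singleton 1)
    have hFmeas2 : MeasurableSet[⨆ j ∈ (Set.Ici 2),
        MeasurableSpace.comap (X j) inferInstance] (⋂ N, Gw X q N) :=
      MeasurableSet.iInter fun N => measurableSet_Gw q N fun i h2 _ => hMeasM _ i h2
    have hdisj2 : Disjoint ({1} : Set ℕ) (Set.Ici 2) := by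
      simp only [Set.disjoint_singleton_left, Set.mem_Ici]
      omega
    have hIndAF := indep_iSup_of_disjoint hcle hiI hdisj2
    rw [Indep_iff] at hIndAF
    have hPE : P (A ∩ ⋂ N, Gw X q N) = P A * P (⋂ N, Gw X q N) :=
      hIndAF A _ hAmeas1 hFmeas2
    have hEset : {ω | X 1 ω = 1 ∧
        ∀ n : ℕ, 1 ≤ n → q - 1 ≤ ∑ i ∈ Finset.Icc 2 (n + 1), (X i ω - q)}
          = A ∩ ⋂ N, Gw X q N := by
      ext ω
      simp only [Set.mem_setOf_eq, Set.mem_inter_iff, Set.mem_iInter, hAdef, Gw, Sw]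
      constructor
      · rintro ⟨h1, h2⟩
        exact ⟨h1, fun N n hn1 _ => h2 n hn1⟩
      · rintro ⟨h1, h2⟩
        exact ⟨h1, fun n hn => h2 n n hn le_rfl⟩
    rw [hEset, hPE, hbernp 1]
    calc ENNReal.ofReal (p * (1 - u ^ (1 - q)))
        = ENNReal.ofReal p * ENNReal.ofReal (1 - u ^ (1 - q)) :=
          ENNReal.ofReal_mul hp0.le
      _ ≤ ENNReal.ofReal p * P (⋂ N, Gw X q N) := mul_le_mul_right hF _
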